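/- For every positive integer d and every x ∈ ℂ there exists a d-dimensional representation of the finite W algebra W₃⁽²⁾ with central value c(d;x) = (1 − d²)/3 − x² and highest weight j(d;x) = d + x − 1; concretely, there exist matrices H, E, F ∈ M_d(ℂ) satisfying [H,E] = 2E, [H,F] = −2F, [E,F] = H² + c(d;x)·1 (with [a,b] = ab − ba), together with a nonzero vector v ∈ ℂ^d such that Ev = 0, Hv = (d + x − 1)v, and the smallest subspace of ℂ^d containing v and invariant under H, E, F is all of ℂ^d. -/
import Mathlib

open Finset Matrix

lemma fin_sum_ite {d : ℕ} (n : ℕ) (c : ℂ) :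
    (∑ m : Fin d, if (m : ℕ) = n then c else 0) = if n < d then c else 0 := by
  by_cases h : n < d
  · rw [if_pos h, Finset.sum_eq_single (⟨n, h⟩ : Fin d)]
    · simp
    · intro b _ hb
      rw [if_neg]
      simpa [Fin.ext_iff] using hb
    · simp
  · rw [if_neg h]
    apply Finset.sum_eq_zero
    intro m _
    rw [if_neg]
    exact fun he => h (he ▸ m.isLt)

theorem W3_2_highest_weight_representation
    (d : ℕ) (hd : 0 < d) (x : ℂ) :
    ∃ (H E F : Matrix (Fin d) (Fin d) ℂ) (v : Fin d → ℂ),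
      H * E - E * H = 2 * E ∧
      H * F - F * H = -(2 * F) ∧
      E * F - F * E = H ^ 2 + ((1 - (d : ℂ) ^ 2) / 3 - x ^ 2) • (1 : Matrix (Fin d) (Fin d) ℂ) ∧
      v ≠ 0 ∧
      E.mulVec v = 0 ∧
      H.mulVec v = ((d : ℂ) + x - 1) • v ∧
      ∀ W : Submodule ℂ (Fin d → ℂ), v ∈ W →
        (∀ w ∈ W, H.mulVec w ∈ W) →
        (∀ w ∈ W, E.mulVec w ∈ W) →
        (∀ w ∈ W, F.mulVec w ∈ W) → W = ⊤ := by
  set j : ℂ := (d : ℂ) + x - 1 with hj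
  set c : ℂ := (1 - (d : ℂ) ^ 2) / 3 - x ^ 2 with hc
  set a : ℕ → ℂ := fun k =>
    (k : ℂ) * (j ^ 2 + c) - 2 * j * ((k : ℂ) ^ 2 - k)
      + (2 / 3) * (2 * (k : ℂ) ^ 3 - 3 * (k : ℂ) ^ 2 + k) with ha
  have ha0 : a 0 = 0 := by simp [ha]
  have had : a d = 0 := by
    simp only [ha, hj, hc]; ring
  have harec : ∀ k : ℕ, a (k + 1) - a k = (j - 2 * k) ^ 2 + c := by
    intro k; simp only [ha]; push_cast; ring
  refine ⟨Matrix.diagonal (fun i => j - 2 * ((i : ℕ) : ℂ)),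
    Matrix.of (fun i k : Fin d => if (i : ℕ) + 1 = (k : ℕ) then a (k : ℕ) else 0),
    Matrix.of (fun i k : Fin d => if (i : ℕ) = (k : ℕ) + 1 then 1 else 0),
    (fun i : Fin d => if (i : ℕ) = 0 then 1 else 0), ?_, ?_, ?_, ?_, ?_, ?_, ?_⟩
  · -- [H,E] = 2E
    rw [two_mul]
    ext i k
    rw [Matrix.sub_apply, Matrix.diagonal_mul, Matrix.mul_diagonal, Matrix.add_apply,
      Matrix.of_apply]
    by_cases h : (i : ℕ) + 1 = (k : ℕ)
    · rw [if_pos h]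
      have hk : ((k : ℕ) : ℂ) = ((i : ℕ) : ℂ) + 1 := by exact_mod_cast h.symm
      rw [hk]; ring
    · rw [if_neg h]; ring
  · -- [H,F] = -2F
    rw [two_mul, neg_add]
    ext i k
    simp only [Matrix.sub_apply, Matrix.diagonal_mul, Matrix.mul_diagonal, Matrix.add_apply,
      Matrix.neg_apply, Matrix.of_apply]
    by_cases h : (i : ℕ) = (k : ℕ) + 1
    · rw [if_pos h]
      have hi : ((i : ℕ) : ℂ) = ((k : ℕ) : ℂ) + 1 := by exact_mod_cast h
      rw [hi]; ring
    · rw [if_neg h]; ring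
  · -- [E,F] = H² + c
    ext i k
    rw [Matrix.sub_apply, Matrix.mul_apply, Matrix.mul_apply, pow_two,
      Matrix.diagonal_mul_diagonal, Matrix.add_apply, Matrix.smul_apply,
      Matrix.diagonal_apply, Matrix.one_apply]
    have h1 : (∑ m : Fin d, Matrix.of (fun i k : Fin d =>
        if (i : ℕ) + 1 = (k : ℕ) then a (k : ℕ) else 0) i m *
        Matrix.of (fun i k : Fin d => if (i : ℕ) = (k : ℕ) + 1 then (1:ℂ) else 0) m k)
        = if (i : ℕ) = (k : ℕ) then a ((i : ℕ) + 1) else 0 := by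
      have hterm : ∀ m : Fin d, Matrix.of (fun i k : Fin d =>
          if (i : ℕ) + 1 = (k : ℕ) then a (k : ℕ) else 0) i m *
          Matrix.of (fun i k : Fin d => if (i : ℕ) = (k : ℕ) + 1 then (1:ℂ) else 0) m k
          = if (m : ℕ) = (i : ℕ) + 1 then
              (if (i : ℕ) = (k : ℕ) then a ((i : ℕ) + 1) else 0) else 0 := by
        intro m
        simp only [Matrix.of_apply]
        by_cases hm : (m : ℕ) = (i : ℕ) + 1
        · by_cases hik : (i : ℕ) = (k : ℕ)
          · rw [if_pos hm, if_pos hik, if_pos (show (i : ℕ) + 1 = (m : ℕ) by omega),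
              if_pos (show (m : ℕ) = (k : ℕ) + 1 by omega), mul_one, hm]
          · rw [if_pos hm, if_neg hik, if_pos (show (i : ℕ) + 1 = (m : ℕ) by omega),
              if_neg (show ¬((m : ℕ) = (k : ℕ) + 1) by omega), mul_zero]
        · rw [if_neg hm, if_neg (show ¬((i : ℕ) + 1 = (m : ℕ)) by omega), zero_mul]
      rw [Finset.sum_congr rfl (fun m _ => hterm m), fin_sum_ite]
      by_cases hb : (i : ℕ) + 1 < d
      · rw [if_pos hb]
      · rw [if_neg hb]
        have hie : (i : ℕ) + 1 = d := by have := i.isLt; omega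
        rw [hie, had]
        split_ifs <;> rfl
    have h2 : (∑ m : Fin d, Matrix.of (fun i k : Fin d =>
        if (i : ℕ) = (k : ℕ) + 1 then (1:ℂ) else 0) i m *
        Matrix.of (fun i k : Fin d => if (i : ℕ) + 1 = (k : ℕ) then a (k : ℕ) else 0) m k)
        = if (i : ℕ) = (k : ℕ) then a (i : ℕ) else 0 := by
      have hterm : ∀ m : Fin d, Matrix.of (fun i k : Fin d =>
          if (i : ℕ) = (k : ℕ) + 1 then (1:ℂ) else 0) i m *
          Matrix.of (fun i k : Fin d => if (i : ℕ) + 1 = (k : ℕ) then a (k : ℕ) else 0) m k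
          = if (m : ℕ) = (i : ℕ) - 1 then
              (if 1 ≤ (i : ℕ) ∧ (i : ℕ) = (k : ℕ) then a (i : ℕ) else 0) else 0 := by
        intro m
        simp only [Matrix.of_apply]
        by_cases hm : (m : ℕ) = (i : ℕ) - 1
        · by_cases hik : 1 ≤ (i : ℕ) ∧ (i : ℕ) = (k : ℕ)
          · rw [if_pos hm, if_pos hik, if_pos (show (i : ℕ) = (m : ℕ) + 1 by omega),
              if_pos (show (m : ℕ) + 1 = (k : ℕ) by omega), one_mul,
              show (k : ℕ) = (i : ℕ) from hik.2.symm]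
          · rw [if_pos hm, if_neg hik]
            by_cases hi1 : 1 ≤ (i : ℕ)
            · have hik' : (i : ℕ) ≠ (k : ℕ) := fun hh => hik ⟨hi1, hh⟩
              rw [if_pos (show (i : ℕ) = (m : ℕ) + 1 by omega),
                if_neg (show ¬((m : ℕ) + 1 = (k : ℕ)) by omega), one_mul]
            · rw [if_neg (show ¬((i : ℕ) = (m : ℕ) + 1) by omega), zero_mul]
        · rw [if_neg hm, if_neg (show ¬((i : ℕ) = (m : ℕ) + 1) by omega), zero_mul]
      rw [Finset.sum_congr rfl (fun m _ => hterm m), fin_sum_ite,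
        if_pos (by have := i.isLt; omega)]
      by_cases hi1 : 1 ≤ (i : ℕ)
      · simp only [hi1, true_and]
      · have hi0 : (i : ℕ) = 0 := by omega
        rw [hi0, ha0]
        simp
    rw [h1, h2]
    by_cases hik : i = k
    · subst hik
      rw [if_pos rfl, if_pos rfl, if_pos rfl, if_pos rfl, smul_eq_mul, mul_one]
      linear_combination harec (i : ℕ)
    · rw [if_neg (fun h => hik (Fin.ext h)), if_neg (fun h => hik (Fin.ext h)),
        if_neg hik, if_neg hik, smul_eq_mul]
      ring
  · -- v ≠ 0
    intro hv
    have h0 := congrFun hv ⟨0, hd⟩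
    simp at h0
  · -- E v = 0
    funext i
    rw [Matrix.mulVec, dotProduct]
    have : (0 : Fin d → ℂ) i = 0 := rfl
    rw [this]
    apply Finset.sum_eq_zero
    intro m _
    simp only [Matrix.of_apply]
    split_ifs <;> first | ring1 | (exfalso; omega)
  · -- H v = j v
    funext i
    rw [Matrix.mulVec_diagonal, Pi.smul_apply, smul_eq_mul]
    by_cases h0 : (i : ℕ) = 0
    · rw [if_pos h0, h0]
      push_cast
      ring
    · rw [if_neg h0]
      ring
  · -- cyclicity
    intro W hv hH hE hF
    have key : ∀ n : ℕ, n < d →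
        (fun i : Fin d => if (i : ℕ) = n then (1 : ℂ) else 0) ∈ W := by
      intro n
      induction n with
      | zero => intro _; exact hv
      | succ n ih =>
        intro h
        have hn : n < d := Nat.lt_of_succ_lt h
        have hmem := hF _ (ih hn)
        have heq : Matrix.mulVec (Matrix.of (fun i k : Fin d =>
            if (i : ℕ) = (k : ℕ) + 1 then (1:ℂ) else 0))
            (fun i : Fin d => if (i : ℕ) = n then (1 : ℂ) else 0)
            = (fun i : Fin d => if (i : ℕ) = n + 1 then (1 : ℂ) else 0) := by
          funext i
          rw [Matrix.mulVec, dotProduct]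
          have hterm : ∀ m : Fin d, Matrix.of (fun i k : Fin d =>
              if (i : ℕ) = (k : ℕ) + 1 then (1:ℂ) else 0) i m *
              (if (m : ℕ) = n then (1 : ℂ) else 0)
              = if (m : ℕ) = n then (if (i : ℕ) = n + 1 then (1:ℂ) else 0) else 0 := by
            intro m
            simp only [Matrix.of_apply]
            split_ifs <;> first | ring1 | (exfalso; omega)
          rw [Finset.sum_congr rfl (fun m _ => hterm m), fin_sum_ite, if_pos hn]
        rw [heq] at hmem
        exact hmem
    rw [eq_top_iff]
    intro w _
    rw [pi_eq_sum_univ w]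
    apply Submodule.sum_mem
    intro i _
    apply Submodule.smul_mem
    have hb : (fun j : Fin d => if i = j then (1:ℂ) else 0)
        = (fun j : Fin d => if (j : ℕ) = (i : ℕ) then (1 : ℂ) else 0) := by
      funext m
      by_cases h : i = m
      · rw [if_pos h, if_pos (by rw [h])]
      · rw [if_neg h, if_neg (fun he => h (Fin.ext he.symm))]
    rw [hb]
    exact key (i : ℕ) i.isLt
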